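/- Let G be a compact Hausdorff topological group and let A, B be closed subgroups of G such that every element of A commutes with every element of B, G = AB, and A ∩ B is finite. Then the multiplication map m : A × B → G, m(a,b) = ab, is a covering map. -/

import Mathlib

open Set Function

/-- A continuous, open, surjective group homomorphism with finite kernel from a Hausdorff
topological group is a covering map. -/
theorem isCoveringMap_of_finite_ker {E G : Type*} [Group E] [TopologicalSpace E]
    [IsTopologicalGroup E] [T2Space E] [Group G] [TopologicalSpace G]
    (φ : E →* G) (hc : Continuous φ) (ho : IsOpenMap φ) (hs : Function.Surjective φ)
    (hk : (φ.ker : Set E).Finite) : IsCoveringMap ⇑φ := by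
  classical
  haveI : Nonempty E := ⟨1⟩
  haveI : Finite ↥φ.ker := hk.to_subtype
  obtain ⟨U, hUo, h1U, hU⟩ : ∃ U : Set E, IsOpen U ∧ (1:E) ∈ U ∧
      ∀ x ∈ U, x ∈ φ.ker → x = 1 := by
    refine ⟨((φ.ker : Set E) \ {1})ᶜ, hk.diff.isClosed.isOpen_compl, by simp, ?_⟩
    intro x hx hxk
    by_contra h
    exact hx ⟨hxk, h⟩
  obtain ⟨V, hV, hVU⟩ := exists_nhds_split_inv (hUo.mem_nhds h1U)
  obtain ⟨V₁, hV₁V, hV₁o, h1V₁⟩ := mem_nhds_iff.mp hV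
  set W₀ : Set E := V₁ ∩ V₁⁻¹ with hW₀def
  have hW₀o : IsOpen W₀ := hV₁o.inter hV₁o.inv
  have h1W₀ : (1:E) ∈ W₀ := ⟨h1V₁, by simpa using h1V₁⟩
  have hkey : ∀ x ∈ W₀, ∀ y ∈ W₀, x⁻¹ * y ∈ φ.ker → x = y := by
    intro x hx y hy hxy
    have hxV : x⁻¹ ∈ V := hV₁V hx.2
    have hyV : y⁻¹ ∈ V := hV₁V hy.2
    have h1 : x⁻¹ / y⁻¹ ∈ U := hVU _ hxV _ hyV
    have h2 : x⁻¹ * y ∈ U := by simpa [div_eq_mul_inv] using h1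
    have := hU _ h2 hxy
    exact inv_mul_eq_one.mp this
  have main : ∀ x₀ : G, ∃ t : Bundle.Trivialization (↥φ.ker) ⇑φ, x₀ ∈ t.baseSet := by
    intro x₀
    obtain ⟨e0, he0⟩ := hs x₀
    set W : Set E := (fun x => e0 * x) '' W₀ with hWdef
    have hWo : IsOpen W := (Homeomorph.mulLeft e0).isOpenMap W₀ hW₀o
    have he0W : e0 ∈ W := ⟨1, h1W₀, mul_one e0⟩
    have hinj : Set.InjOn ⇑φ W := by
      rintro _ ⟨a, ha, rfl⟩ _ ⟨b, hb, rfl⟩ h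
      have hab : φ a = φ b := by
        simp only [map_mul] at h
        exact mul_left_cancel h
      have hm : a⁻¹ * b ∈ φ.ker := by
        rw [MonoidHom.mem_ker, map_mul, map_inv, hab, inv_mul_cancel]
      rw [hkey a ha b hb hm]
    set S : Set G := ⇑φ '' W with hSdef
    have hSo : IsOpen S := ho W hWo
    have hx₀S : x₀ ∈ S := ⟨e0, he0W, he0⟩
    set P : PartialHomeomorph E G :=
      PartialHomeomorph.ofContinuousOpen (hinj.toPartialEquiv ⇑φ W) hc.continuousOn ho hWo
      with hPdef
    have hPsymm_mem : ∀ g ∈ S, P.symm g ∈ W := fun g hg => P.map_target hg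
    have hPright : ∀ g ∈ S, φ (P.symm g) = g := fun g hg => P.right_inv hg
    have hPleft : ∀ w ∈ W, P.symm (φ w) = w := fun w hw => P.left_inv hw
    set κ : E → ↥φ.ker := fun x =>
      if h : (P.symm (φ x))⁻¹ * x ∈ φ.ker then ⟨_, h⟩ else 1 with hκdef
    have hκ_spec : ∀ w ∈ W, ∀ k : ↥φ.ker, κ (w * (k : E)) = k := by
      intro w hw k
      have hφk : φ (k : E) = 1 := k.2
      have h1 : φ (w * (k : E)) = φ w := by rw [map_mul, hφk, mul_one]
      have h2 : P.symm (φ (w * (k : E))) = w := by rw [h1]; exact hPleft w hw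
      have h3 : (P.symm (φ (w * (k : E))))⁻¹ * (w * (k : E)) = (k : E) := by
        rw [h2, inv_mul_cancel_left]
      have h4 : (P.symm (φ (w * (k : E))))⁻¹ * (w * (k : E)) ∈ φ.ker := by
        rw [h3]; exact k.2
      simp only [hκdef]
      rw [dif_pos h4]
      exact Subtype.ext h3
    have hdec : ∀ x : E, φ x ∈ S → (P.symm (φ x))⁻¹ * x ∈ φ.ker := by
      intro x hx
      rw [MonoidHom.mem_ker, map_mul, map_inv, hPright _ hx, inv_mul_cancel]
    have hκ_val : ∀ x : E, φ x ∈ S → (κ x : E) = (P.symm (φ x))⁻¹ * x := by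
      intro x hx
      simp only [hκdef]
      rw [dif_pos (hdec x hx)]
    refine ⟨Bundle.Trivialization.mk (OpenPartialHomeomorph.mk (PartialHomeomorph.mk (PartialEquiv.mk
      (fun x => (φ x, κ x)) (fun p => P.symm p.1 * ((p.2 : ↥φ.ker) : E))
      (⇑φ ⁻¹' S) (S ×ˢ (Set.univ : Set ↥φ.ker)) ?_ ?_ ?_ ?_) ?_ ?_)
      (hSo.preimage hc) (hSo.prod isOpen_univ)) S hSo rfl rfl ?_, hx₀S⟩
    · -- map_source'
      intro x hx
      exact ⟨hx, trivial⟩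
    · -- map_target'
      intro p hp
      replace hp : p.1 ∈ S := hp.1
      have h1 : φ (P.symm p.1 * (p.2 : E)) = p.1 := by
        rw [map_mul, MonoidHom.mem_ker.mp p.2.2, mul_one, hPright _ hp]
      show φ (P.symm p.1 * (p.2 : E)) ∈ S
      rw [h1]; exact hp
    · -- left_inv'
      intro x hx
      show P.symm (φ x) * (κ x : E) = x
      rw [hκ_val x hx, mul_inv_cancel_left]
    · -- right_inv'
      intro p hp
      have h1 : φ (P.symm p.1 * (p.2 : E)) = p.1 := by
        rw [map_mul, MonoidHom.mem_ker.mp p.2.2, mul_one, hPright _ hp.1]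
      have h2 : κ (P.symm p.1 * (p.2 : E)) = p.2 := hκ_spec _ (hPsymm_mem _ hp.1) p.2
      show (φ (P.symm p.1 * (p.2 : E)), κ (P.symm p.1 * (p.2 : E))) = p
      rw [Prod.ext_iff]
      exact ⟨h1, h2⟩
    · -- continuousOn_toFun
      intro x hx
      have hx' : φ x ∈ S := hx
      have hwW : P.symm (φ x) ∈ W := hPsymm_mem _ hx'
      set k : ↥φ.ker := κ x with hkdef
      have hN : IsOpen ((fun y => y * (k : E)) '' W) :=
        (Homeomorph.mulRight (k : E)).isOpenMap W hWo
      have hxN : x ∈ (fun y => y * (k : E)) '' W := by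
        refine ⟨P.symm (φ x), hwW, ?_⟩
        show P.symm (φ x) * (k : E) = x
        rw [hkdef, hκ_val x hx', mul_inv_cancel_left]
      have hconst : ∀ y ∈ (fun y => y * (k : E)) '' W, κ y = k := by
        rintro _ ⟨w', hw', rfl⟩
        exact hκ_spec w' hw' k
      have hκcont : ContinuousAt κ x :=
        (Filter.eventuallyEq_of_mem (hN.mem_nhds hxN) hconst).continuousAt
      exact (hc.continuousAt.prodMk hκcont).continuousWithinAt
    · -- continuousOn_invFun
      have h1 : ContinuousOn (fun p : G × ↥φ.ker => P.symm p.1)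
          (S ×ˢ (Set.univ : Set ↥φ.ker)) :=
        P.symm.continuousOn.comp continuousOn_fst fun p hp => hp.1
      exact h1.mul (continuous_subtype_val.comp continuous_snd).continuousOn
    · -- proj_toFun
      intro x _
      rfl
  exact IsCoveringMap.mk ⇑φ (fun _ => ↥φ.ker) (fun x => (main x).choose)
    fun x => (main x).choose_spec

/-- Let `G` be a compact Hausdorff topological group and `A`, `B` closed subgroups such that
every element of `A` commutes with every element of `B`, `G = AB`, and `A ∩ B` is finite.
Then the multiplication map `A × B → G`, `(a, b) ↦ a * b`, is a covering map (in particular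
it is a continuous surjection with evenly covered neighbourhoods). -/
theorem mul_isCoveringMap_of_almostDirectProduct {G : Type*} [Group G] [TopologicalSpace G]
    [IsTopologicalGroup G] [CompactSpace G] [T2Space G]
    (A B : Subgroup G) (hA : IsClosed (A : Set G)) (hB : IsClosed (B : Set G))
    (hcomm : ∀ a ∈ A, ∀ b ∈ B, a * b = b * a)
    (hAB : ∀ g : G, ∃ a ∈ A, ∃ b ∈ B, g = a * b)
    (hfin : ((A ⊓ B : Subgroup G) : Set G).Finite) :
    Function.Surjective (fun p : A × B => (p.1 : G) * (p.2 : G)) ∧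
    IsCoveringMap (fun p : A × B => (p.1 : G) * (p.2 : G)) := by
  haveI : CompactSpace A := isCompact_iff_compactSpace.mp (hA.isCompact)
  haveI : CompactSpace B := isCompact_iff_compactSpace.mp (hB.isCompact)
  let φ : A × B →* G :=
    { toFun := fun p => (p.1 : G) * (p.2 : G)
      map_one' := by simp
      map_mul' := by
        rintro ⟨a, b⟩ ⟨c, d⟩
        show ((a * c : A) : G) * ((b * d : B) : G) = ((a : G) * b) * ((c : G) * d)
        push_cast
        have hcb : Commute (c : G) (b : G) := hcomm c c.2 b b.2
        exact hcb.mul_mul_mul_comm (a : G) (d : G) }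
  have hφc : Continuous φ :=
    (continuous_subtype_val.comp continuous_fst).mul
      (continuous_subtype_val.comp continuous_snd)
  have hsurj : Function.Surjective ⇑φ := by
    intro g
    obtain ⟨a, ha, b, hb, rfl⟩ := hAB g
    exact ⟨(⟨a, ha⟩, ⟨b, hb⟩), rfl⟩
  have hker : (φ.ker : Set (A × B)).Finite := by
    apply Set.Finite.of_finite_image (f := fun p : A × B => (p.1 : G))
    · apply hfin.subset
      rintro _ ⟨p, hp, rfl⟩
      have hp1 : (p.1 : G) * (p.2 : G) = 1 := hp
      have h2 : (p.1 : G) = ((p.2 : G))⁻¹ := eq_inv_of_mul_eq_one_left hp1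
      refine ⟨p.1.2, ?_⟩
      show (p.1 : G) ∈ B
      rw [h2]
      exact inv_mem p.2.2
    · intro p hp q hq h
      have hp1 : (p.1 : G) * (p.2 : G) = 1 := hp
      have hq1 : (q.1 : G) * (q.2 : G) = 1 := hq
      have h1 : p.1 = q.1 := Subtype.ext h
      have h2 : p.2 = q.2 := by
        apply Subtype.ext
        have e1 : (p.2 : G) = ((p.1 : G))⁻¹ := eq_inv_of_mul_eq_one_right hp1
        have e2 : (q.2 : G) = ((q.1 : G))⁻¹ := eq_inv_of_mul_eq_one_right hq1
        rw [e1, e2]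
        exact congrArg Inv.inv h
      exact Prod.ext h1 h2
  have hclosed : IsClosedMap ⇑φ := hφc.isClosedMap
  have hqm := hclosed.isQuotientMap hφc hsurj
  have ho : IsOpenMap ⇑φ := by
    intro U hU
    rw [← hqm.isOpen_preimage]
    have heq : ⇑φ ⁻¹' (⇑φ '' U) = ⋃ k ∈ (φ.ker : Set (A × B)), (fun x => x * k) '' U := by
      ext x
      simp only [Set.mem_preimage, Set.mem_image, Set.mem_iUnion]
      constructor
      · rintro ⟨u, hu, huv⟩
        refine ⟨u⁻¹ * x, ?_, u, hu, by rw [mul_inv_cancel_left]⟩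
        rw [SetLike.mem_coe, MonoidHom.mem_ker, map_mul, map_inv, huv, inv_mul_cancel]
      · rintro ⟨k, hk, u, hu, rfl⟩
        refine ⟨u, hu, ?_⟩
        rw [map_mul, MonoidHom.mem_ker.mp hk, mul_one]
    rw [heq]
    exact isOpen_biUnion fun k _ => (Homeomorph.mulRight k).isOpenMap U hU
  exact ⟨hsurj, isCoveringMap_of_finite_ker φ hφc ho hsurj hker⟩
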